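/- For every ρ₀ > 0, the function u(r) := −(1/2)·(ρ₀⁴ − (r² + (√3/2)ρ₀²)²)^{1/2}, defined on the interval 0 < r < ((2−√3)/2)^{1/2}ρ₀, is twice differentiable with u'(r) = r(r² + (√3/2)ρ₀²)/(ρ₀⁴ − (r² + (√3/2)ρ₀²)²)^{1/2}, and satisfies the rotationally symmetric vanishing-E₁ equation (1/3)r⁴u''(r)² − ((4/3)r·u'(r)³ + 2r³u'(r))·u''(r) + (1/3)u'(r)⁶/r² + u'(r)⁴ − r⁴ = 0; moreover u(r) − u(0⁺) = (1/4)ρ₀² − (1/2)(ρ₀⁴ − (r² + (√3/2)ρ₀²)²)^{1/2} where u(0⁺) := lim_{r→0⁺} u(r) = −(1/4)ρ₀². -/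

import Mathlib

open Filter

lemma key_ode (r a s A B : ℝ) (hr : r ≠ 0) (hs : 0 < s)
    (hs2 : s ^ 2 = 4 / 3 * a ^ 2 - (r ^ 2 + a) ^ 2)
    (hA : A = r * (r ^ 2 + a) / s)
    (hB : B = ((3 * r ^ 2 + a) * s ^ 2 + 2 * r ^ 2 * (r ^ 2 + a) ^ 2) / s ^ 3) :
    (1 / 3) * r ^ 4 * B ^ 2 - ((4 / 3) * r * A ^ 3 + 2 * r ^ 3 * A) * B
      + (1 / 3) * A ^ 6 / r ^ 2 + A ^ 4 - r ^ 4 = 0 := by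
  have hs' : s ≠ 0 := hs.ne'
  subst hA hB
  field_simp
  rw [show s ^ 6 = (s ^ 2) ^ 3 by ring, hs2]
  ring

/-- the lower half of a type I shifted Heisenberg sphere,
`u(r) = −(1/2)√(ρ₀⁴ − (r² + (√3/2)ρ₀²)²)` on `0 < r < √((2−√3)/2)·ρ₀`, is twice
differentiable with the stated first derivative, satisfies the rotationally symmetric
vanishing-E₁ equation, and `u(r) − u(0⁺) = (1/4)ρ₀² − (1/2)√(ρ₀⁴ − (r² + (√3/2)ρ₀²)²)`
where `u(0⁺) = −(1/4)ρ₀²`. -/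
theorem stmt_18 (ρ₀ : ℝ) (hρ₀ : 0 < ρ₀) (R : ℝ)
    (hR : R = Real.sqrt ((2 - Real.sqrt 3) / 2) * ρ₀)
    (u : ℝ → ℝ)
    (hu : ∀ r, u r =
      -(1 / 2) * Real.sqrt (ρ₀ ^ 4 - (r ^ 2 + (Real.sqrt 3 / 2) * ρ₀ ^ 2) ^ 2)) :
    (∀ r ∈ Set.Ioo (0 : ℝ) R,
      HasDerivAt u (r * (r ^ 2 + (Real.sqrt 3 / 2) * ρ₀ ^ 2)
        / Real.sqrt (ρ₀ ^ 4 - (r ^ 2 + (Real.sqrt 3 / 2) * ρ₀ ^ 2) ^ 2)) r)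
    ∧ (∀ r ∈ Set.Ioo (0 : ℝ) R, DifferentiableAt ℝ (deriv u) r)
    ∧ (∀ r ∈ Set.Ioo (0 : ℝ) R,
        (1 / 3) * r ^ 4 * (deriv (deriv u) r) ^ 2
          - ((4 / 3) * r * (deriv u r) ^ 3 + 2 * r ^ 3 * deriv u r) * deriv (deriv u) r
          + (1 / 3) * (deriv u r) ^ 6 / r ^ 2 + (deriv u r) ^ 4 - r ^ 4 = 0)
    ∧ Tendsto u (nhdsWithin 0 (Set.Ioi 0)) (nhds (-(1 / 4) * ρ₀ ^ 2))
    ∧ (∀ r ∈ Set.Ioo (0 : ℝ) R,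
        u r - (-(1 / 4) * ρ₀ ^ 2) = (1 / 4) * ρ₀ ^ 2
          - (1 / 2) * Real.sqrt (ρ₀ ^ 4 - (r ^ 2 + (Real.sqrt 3 / 2) * ρ₀ ^ 2) ^ 2)) := by
  have hufun : u = fun r => -(1 / 2) *
      Real.sqrt (ρ₀ ^ 4 - (r ^ 2 + (Real.sqrt 3 / 2) * ρ₀ ^ 2) ^ 2) := funext hu
  subst hufun
  set a : ℝ := (Real.sqrt 3 / 2) * ρ₀ ^ 2 with ha_def
  have h3 : Real.sqrt 3 ^ 2 = 3 := Real.sq_sqrt (by norm_num)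
  have h3nn : (0:ℝ) ≤ Real.sqrt 3 := Real.sqrt_nonneg 3
  have h3lt : Real.sqrt 3 < 2 := by nlinarith
  have ha_pos : 0 < a := by
    have : 0 < Real.sqrt 3 := Real.sqrt_pos.mpr (by norm_num)
    rw [ha_def]; positivity
  have ha2 : a ^ 2 = 3 / 4 * ρ₀ ^ 4 := by
    rw [ha_def]; linear_combination (ρ₀ ^ 4 / 4) * h3
  have hR2 : R ^ 2 = (2 - Real.sqrt 3) / 2 * ρ₀ ^ 2 := by
    rw [hR, mul_pow, Real.sq_sqrt (by linarith)]
  -- membership in Ioo gives positivity of the radicand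
  have hpos : ∀ r ∈ Set.Ioo (0 : ℝ) R, (r ^ 2 + a) ^ 2 < ρ₀ ^ 4 := by
    rintro r ⟨hr0, hrR⟩
    have hrr : r ^ 2 < R ^ 2 := by nlinarith
    have h1 : r ^ 2 + a < ρ₀ ^ 2 := by
      rw [hR2] at hrr; rw [ha_def]; nlinarith
    have h2 : 0 < r ^ 2 + a := by positivity
    nlinarith
  -- first derivative on the open set where radicand is positive
  have hderiv : ∀ x : ℝ, (x ^ 2 + a) ^ 2 < ρ₀ ^ 4 →
      HasDerivAt (fun r => -(1 / 2) * Real.sqrt (ρ₀ ^ 4 - (r ^ 2 + a) ^ 2))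
        (x * (x ^ 2 + a) / Real.sqrt (ρ₀ ^ 4 - (x ^ 2 + a) ^ 2)) x := by
    intro x hx
    have hfx : 0 < ρ₀ ^ 4 - (x ^ 2 + a) ^ 2 := by linarith
    have hsx : 0 < Real.sqrt (ρ₀ ^ 4 - (x ^ 2 + a) ^ 2) := Real.sqrt_pos.mpr hfx
    have h1 : HasDerivAt (fun y : ℝ => y ^ 2 + a) (2 * x) x := by
      simpa using (hasDerivAt_pow 2 x).add_const a
    have h2 : HasDerivAt (fun y : ℝ => ρ₀ ^ 4 - (y ^ 2 + a) ^ 2)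
        (-((2 : ℕ) * (x ^ 2 + a) ^ (2 - 1) * (2 * x))) x := (h1.pow 2).const_sub (ρ₀ ^ 4)
    have h4 := (h2.sqrt hfx.ne').const_mul (-(1 / 2) : ℝ)
    refine h4.congr_deriv ?_
    field_simp
    ring
  -- value of deriv u on that open set
  set v : ℝ → ℝ := fun x => x * (x ^ 2 + a) / Real.sqrt (ρ₀ ^ 4 - (x ^ 2 + a) ^ 2) with hv_def
  set U : Set ℝ := {x | (x ^ 2 + a) ^ 2 < ρ₀ ^ 4} with hU_def
  have hUopen : IsOpen U := isOpen_lt (by fun_prop) continuous_const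
  have hEq : Set.EqOn
      (deriv fun r => -(1 / 2) * Real.sqrt (ρ₀ ^ 4 - (r ^ 2 + a) ^ 2)) v U :=
    fun x hx => (hderiv x hx).deriv
  -- second derivative data at points of Ioo 0 R
  have hsecond : ∀ r ∈ Set.Ioo (0 : ℝ) R,
      HasDerivAt (deriv fun r => -(1 / 2) * Real.sqrt (ρ₀ ^ 4 - (r ^ 2 + a) ^ 2))
        (((3 * r ^ 2 + a) * Real.sqrt (ρ₀ ^ 4 - (r ^ 2 + a) ^ 2)
            - r * (r ^ 2 + a) * (-((2 : ℕ) * (r ^ 2 + a) ^ (2 - 1) * (2 * r))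
              / (2 * Real.sqrt (ρ₀ ^ 4 - (r ^ 2 + a) ^ 2))))
          / Real.sqrt (ρ₀ ^ 4 - (r ^ 2 + a) ^ 2) ^ 2) r := by
    intro r hr
    have hx : (r ^ 2 + a) ^ 2 < ρ₀ ^ 4 := hpos r hr
    have hfx : 0 < ρ₀ ^ 4 - (r ^ 2 + a) ^ 2 := by linarith
    have hsx : 0 < Real.sqrt (ρ₀ ^ 4 - (r ^ 2 + a) ^ 2) := Real.sqrt_pos.mpr hfx
    have h1 : HasDerivAt (fun y : ℝ => y ^ 2 + a) (2 * r) r := by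
      simpa using (hasDerivAt_pow 2 r).add_const a
    have hN : HasDerivAt (fun y : ℝ => y * (y ^ 2 + a)) (1 * (r ^ 2 + a) + r * (2 * r)) r :=
      (hasDerivAt_id r).mul h1
    have h2 : HasDerivAt (fun y : ℝ => ρ₀ ^ 4 - (y ^ 2 + a) ^ 2)
        (-((2 : ℕ) * (r ^ 2 + a) ^ (2 - 1) * (2 * r))) r := (h1.pow 2).const_sub (ρ₀ ^ 4)
    have hS := h2.sqrt hfx.ne'
    have hv : HasDerivAt v
        (((1 * (r ^ 2 + a) + r * (2 * r)) * Real.sqrt (ρ₀ ^ 4 - (r ^ 2 + a) ^ 2)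
            - r * (r ^ 2 + a) * (-((2 : ℕ) * (r ^ 2 + a) ^ (2 - 1) * (2 * r))
              / (2 * Real.sqrt (ρ₀ ^ 4 - (r ^ 2 + a) ^ 2))))
          / Real.sqrt (ρ₀ ^ 4 - (r ^ 2 + a) ^ 2) ^ 2) r := hN.div hS hsx.ne'
    have hev : (deriv fun r => -(1 / 2) * Real.sqrt (ρ₀ ^ 4 - (r ^ 2 + a) ^ 2)) =ᶠ[nhds r] v :=
      Filter.eventuallyEq_of_mem (hUopen.mem_nhds hx) hEq
    have := hv.congr_of_eventuallyEq hev
    refine this.congr_deriv ?_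
    ring
  refine ⟨fun r hr => hderiv r (hpos r hr), fun r hr => (hsecond r hr).differentiableAt, ?_, ?_, ?_⟩
  · -- the ODE
    intro r hr
    obtain ⟨hr0, hrR⟩ := hr
    have hx : (r ^ 2 + a) ^ 2 < ρ₀ ^ 4 := hpos r ⟨hr0, hrR⟩
    have hfx : 0 < ρ₀ ^ 4 - (r ^ 2 + a) ^ 2 := by linarith
    have hsx : 0 < Real.sqrt (ρ₀ ^ 4 - (r ^ 2 + a) ^ 2) := Real.sqrt_pos.mpr hfx
    set s := Real.sqrt (ρ₀ ^ 4 - (r ^ 2 + a) ^ 2) with hs_def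
    have hss : s ^ 2 = ρ₀ ^ 4 - (r ^ 2 + a) ^ 2 := Real.sq_sqrt hfx.le
    have hs2 : s ^ 2 = 4 / 3 * a ^ 2 - (r ^ 2 + a) ^ 2 := by
      rw [hs_def, Real.sq_sqrt hfx.le]; linarith [ha2]
    have hA : deriv (fun r => -(1 / 2) * Real.sqrt (ρ₀ ^ 4 - (r ^ 2 + a) ^ 2)) r
        = r * (r ^ 2 + a) / s := (hderiv r hx).deriv
    have hB : deriv (deriv fun r => -(1 / 2) * Real.sqrt (ρ₀ ^ 4 - (r ^ 2 + a) ^ 2)) r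
        = ((3 * r ^ 2 + a) * s ^ 2 + 2 * r ^ 2 * (r ^ 2 + a) ^ 2) / s ^ 3 := by
      rw [(hsecond r ⟨hr0, hrR⟩).deriv, ← hs_def]
      clear_value s
      push_cast
      field_simp
      ring
    rw [hA, hB]
    clear_value s
    exact key_ode r a s _ _ hr0.ne' hsx hs2 rfl rfl
  · -- the limit at 0⁺
    have hc : Continuous fun r : ℝ => -(1 / 2) * Real.sqrt (ρ₀ ^ 4 - (r ^ 2 + a) ^ 2) := by
      have : Continuous fun r : ℝ => ρ₀ ^ 4 - (r ^ 2 + a) ^ 2 := by fun_prop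
      exact continuous_const.mul (Real.continuous_sqrt.comp this)
    have h0 : -(1 / 2) * Real.sqrt (ρ₀ ^ 4 - ((0:ℝ) ^ 2 + a) ^ 2) = -(1 / 4) * ρ₀ ^ 2 := by
      have heq : ρ₀ ^ 4 - ((0:ℝ) ^ 2 + a) ^ 2 = (ρ₀ ^ 2 / 2) ^ 2 := by
        linear_combination -ha2
      rw [heq, Real.sqrt_sq (by positivity)]
      ring
    exact h0 ▸ hc.continuousWithinAt
  · -- the last identity
    intro r hr
    ring
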